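/- Let A be a C*-algebra and let {C_i} be a collection of C*-subalgebras of A with the following property: for every finite subset F ⊆ A and every ε > 0 there is some C_i with F ⊆_ε C_i. Then for any positive elements a, b ∈ A with a ≾ b and any ε > 0, there exist an index i and positive elements a_i, b_i ∈ C_i such that ‖a − a_i‖ ≤ ε, ‖b − b_i‖ ≤ ε, (a_i − ε)_+ ≾ b_i with the Cuntz subequivalence witnessed inside C_i, and b_i ≾ b in A. -/

import Mathlib

open Filter Topology

/-- Cuntz subequivalence in a C*-algebra: `a ≾ b` iff there are sequences `(x_n)`,
`(y_n)` with `x_n * b * y_n → a` in norm. -/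
def CuntzLE {A : Type*} [CStarAlgebra A] (a b : A) : Prop :=
  ∃ x y : ℕ → A, Tendsto (fun n => x n * b * y n) atTop (𝓝 a)

/-- Cuntz subequivalence witnessed inside a subset `C` of a C*-algebra: the witnessing
sequences can be taken in `C`. -/
def CuntzLEIn {A : Type*} [CStarAlgebra A] (C : Set A) (a b : A) : Prop :=
  ∃ x y : ℕ → A, (∀ n, x n ∈ C) ∧ (∀ n, y n ∈ C) ∧
    Tendsto (fun n => x n * b * y n) atTop (𝓝 a)

section Aux

variable {A : Type*} [CStarAlgebra A]

lemma cfc_mem_of_mem_of_isClosed {S : StarSubalgebra ℂ A} (hS : IsClosed (S : Set A))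
    {a : A} (haS : a ∈ S) (ha : IsSelfAdjoint a) (f : ℝ → ℝ) : cfc f a ∈ S := by
  by_cases hf : ContinuousOn f (spectrum ℝ a)
  · have hmaps : Set.MapsTo Complex.re (spectrum ℂ a) (spectrum ℝ a) :=
      fun z hz => ha.spectrumRestricts.apply_mem hz
    have hg : ContinuousOn (fun x : ℂ => (f x.re : ℂ)) (spectrum ℂ a) :=
      Complex.continuous_ofReal.comp_continuousOn
        (hf.comp Complex.continuous_re.continuousOn hmaps)
    rw [cfc_real_eq_complex f ha, cfc_apply _ a ha.isStarNormal hg,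
      cfcHom_eq_of_isStarNormal]
    exact StarAlgebra.elemental.le_of_mem hS haS (Subtype.coe_prop _)
  · rw [cfc_apply_of_not_continuousOn a hf]
    exact zero_mem S

variable [PartialOrder A] [StarOrderedRing A]

lemma algebraMap_nonneg' {r : ℝ} (hr : 0 ≤ r) : (0:A) ≤ algebraMap ℝ A r := by
  rw [← cfc_const r (0 : A) (.zero A)]
  exact cfc_nonneg (fun _ _ => hr)

lemma algebraMap_mono' {r s : ℝ} (h : r ≤ s) : algebraMap ℝ A r ≤ algebraMap ℝ A s := by
  rw [← sub_nonneg, ← map_sub]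
  exact algebraMap_nonneg' (by linarith)

lemma spectrum_lower {s : A} (hs : IsSelfAdjoint s) {δ : ℝ}
    (h : 0 ≤ s + algebraMap ℝ A δ) : ∀ t ∈ spectrum ℝ s, -δ ≤ t := by
  intro t ht
  have h1 : s + algebraMap ℝ A δ = cfc (fun t : ℝ => t + δ) s := by
    rw [cfc_add (a := s) (fun t => t) (fun _ => δ), cfc_id' ℝ s hs, cfc_const δ s hs]
  have h2 : t + δ ∈ spectrum ℝ (cfc (fun t : ℝ => t + δ) s) := by
    rw [cfc_map_spectrum (fun t : ℝ => t + δ) s]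
    exact ⟨t, ht, rfl⟩
  have := spectrum_nonneg_of_nonneg (h1 ▸ h) h2
  linarith

lemma keyCore {S : StarSubalgebra ℂ A} (hS : IsClosed (S : Set A)) {a b v : A}
    (haS : a ∈ S) (hbS : b ∈ S) (hvS : v ∈ S) (ha : 0 ≤ a) (hb : 0 ≤ b)
    {ε : ℝ} (hε : 0 < ε) (hle : a - algebraMap ℝ A ε ≤ star v * b * v) :
    ∃ x y : ℕ → A, (∀ n, x n ∈ (S : Set A)) ∧ (∀ n, y n ∈ (S : Set A)) ∧
      Tendsto (fun n => x n * b * y n) atTop (𝓝 (cfc (fun t : ℝ => max (t - ε) 0) a)) := by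
  have ha' : IsSelfAdjoint a := .of_nonneg ha
  set m : ℝ → ℝ := fun t => max (t - ε) 0 with hm_def
  have hmc : Continuous m := by fun_prop
  have hm0 : ∀ t, 0 ≤ m t := fun t => le_max_right _ _
  set p := cfc m a with hp_def
  have hpS : p ∈ S := cfc_mem_of_mem_of_isClosed hS haS ha' m
  have hp' : IsSelfAdjoint p := IsSelfAdjoint.cfc
  set q := cfc (fun t => m t * m t) a with hq_def
  have hqp : q = p * p := cfc_mul m m a hmc.continuousOn hmc.continuousOn
  have hq0 : 0 ≤ q := by
    have h0 : (0:A) ≤ star p * p := star_mul_self_nonneg p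
    rw [hp'.star_eq] at h0
    rw [hqp]; exact h0
  set h := cfc (fun t => Real.sqrt (m t)) a with hh_def
  have hhS : h ∈ S := cfc_mem_of_mem_of_isClosed hS haS ha' _
  have hh' : IsSelfAdjoint h := IsSelfAdjoint.cfc
  have key1 : h * (a - algebraMap ℝ A ε) * h = q := by
    have h1 : a - algebraMap ℝ A ε = cfc (fun t : ℝ => t - ε) a := by
      rw [cfc_sub (fun t => t) (fun _ => ε) a, cfc_id' ℝ a ha', cfc_const ε a ha']
    have hsc' : Continuous (fun t : ℝ => Real.sqrt (m t)) := Real.continuous_sqrt.comp hmc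
    rw [h1, hh_def, hq_def,
      ← cfc_mul (fun t => Real.sqrt (m t)) (fun t => t - ε) a hsc'.continuousOn ((continuous_id'.sub continuous_const)).continuousOn,
      ← cfc_mul (fun t => Real.sqrt (m t) * (t - ε)) (fun t => Real.sqrt (m t)) a ((hsc'.mul (continuous_id'.sub continuous_const)).continuousOn)
        hsc'.continuousOn]
    refine cfc_congr fun t _ => ?_
    have e1 : Real.sqrt (m t) * (t - ε) * Real.sqrt (m t)
        = (Real.sqrt (m t) * Real.sqrt (m t)) * (t - ε) := by ring
    rw [e1, Real.mul_self_sqrt (hm0 t)]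
    rcases le_or_gt (t - ε) 0 with hc | hc
    · simp [hm_def, max_eq_right hc]
    · simp [hm_def, max_eq_left hc.le]
  set c' := h * (star v * b * v) * h with hc'_def
  have hc'S : c' ∈ S :=
    mul_mem (mul_mem hhS (mul_mem (mul_mem (star_mem hvS) hbS) hvS)) hhS
  have hvh : star (v * h) * b * (v * h) = c' := by
    rw [star_mul, hh'.star_eq, hc'_def]
    noncomm_ring
  have hc'0 : 0 ≤ c' := hvh ▸ star_left_conjugate_nonneg hb (v * h)
  have hc'sa : IsSelfAdjoint c' := .of_nonneg hc'0
  have hqc' : q ≤ c' := by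
    rw [← key1, hc'_def]
    exact hh'.conjugate_le_conjugate hle
  have hspec : ∀ t ∈ spectrum ℝ c', 0 ≤ t := spectrum_nonneg_of_nonneg hc'0
  -- sequences
  set θ : ℕ → ℝ := fun n => (((n:ℝ)+1)⁻¹) ^ 3 with hθ_def
  have hθ : ∀ n, 0 < θ n := fun n => by positivity
  set sfun : ℕ → ℝ → ℝ := fun n t => (Real.sqrt (max t 0 + θ n))⁻¹ with hsfun_def
  have hsfun_pos : ∀ (n : ℕ) (t : ℝ), 0 < max t 0 + θ n :=
    fun n t => add_pos_of_nonneg_of_pos (le_max_right t 0) (hθ n)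
  have hsc : ∀ n, Continuous (sfun n) := by
    intro n
    exact (Real.continuous_sqrt.comp (by fun_prop)).inv₀
      (fun t => ne_of_gt (Real.sqrt_pos.mpr (hsfun_pos n t)))
  set s := fun n => cfc (sfun n) c' with hs_def
  have hsS : ∀ n, s n ∈ S := fun n => cfc_mem_of_mem_of_isClosed hS hc'S hc'sa _
  set ufun : ℕ → ℝ → ℝ := fun n t => ((n:ℝ)+1) / (1 + ((n:ℝ)+1) * m t) with hufun_def
  have hudenom : ∀ (n : ℕ) (t : ℝ), 0 < 1 + ((n:ℝ)+1) * m t := by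
    intro n t
    have := hm0 t
    positivity
  have huc : ∀ n, Continuous (ufun n) := fun n =>
    continuous_const.div (by fun_prop) (fun t => ne_of_gt (hudenom n t))
  set u := fun n => cfc (ufun n) a with hu_def
  have huS : ∀ n, u n ∈ S := fun n => cfc_mem_of_mem_of_isClosed hS haS ha' _
  have hu_norm : ∀ n, ‖u n‖ ≤ (n:ℝ)+1 := by
    intro n
    refine norm_cfc_le (by positivity) fun t _ => ?_
    have h1 := hm0 t
    rw [Real.norm_eq_abs, abs_of_nonneg (le_of_lt (by positivity))]
    rw [div_le_iff₀ (hudenom n t)]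
    nlinarith [mul_nonneg (mul_nonneg (by positivity : (0:ℝ) ≤ (n:ℝ)+1)
      (by positivity : (0:ℝ) ≤ (n:ℝ)+1)) (hm0 t)]
  have hi : ∀ n, ‖u n * q - p‖ ≤ ((n:ℝ)+1)⁻¹ := by
    intro n
    have e1 : u n * q = cfc (fun t => ufun n t * (m t * m t)) a := by
      rw [hu_def, hq_def, ← cfc_mul (ufun n) (fun t => m t * m t) a (huc n).continuousOn (hmc.mul hmc).continuousOn]
    rw [e1, hp_def, ← cfc_sub (fun t => ufun n t * (m t * m t)) m a (((huc n).mul (hmc.mul hmc)).continuousOn) hmc.continuousOn]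
    refine norm_cfc_le (by positivity) fun t _ => ?_
    have hd : (1 + ((n:ℝ)+1) * m t) ≠ 0 := (hudenom n t).ne'
    have e2 : ufun n t * (m t * m t) - m t = -(m t / (1 + ((n:ℝ)+1) * m t)) := by
      rw [hufun_def]
      field_simp [hd]
      ring
    have h1 := hm0 t
    rw [e2, Real.norm_eq_abs, abs_neg, abs_of_nonneg (div_nonneg h1 (hudenom n t).le)]
    rw [div_le_iff₀ (hudenom n t)]
    have e3 : ((n:ℝ)+1)⁻¹ * (1 + ((n:ℝ)+1) * m t) = ((n:ℝ)+1)⁻¹ + m t := by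
      field_simp
    rw [e3]
    have : (0:ℝ) ≤ ((n:ℝ)+1)⁻¹ := by positivity
    linarith
  have hii : ∀ n, ‖p * (s n * c' * s n) * p - q‖ ≤ θ n := by
    intro n
    have hk : cfc (fun t : ℝ => sfun n t * t * sfun n t) c' = s n * c' * s n := by
      rw [cfc_mul (fun t => sfun n t * t) (sfun n) c' (((hsc n).mul continuous_id').continuousOn) (hsc n).continuousOn,
        cfc_mul (sfun n) (fun t => t) c' (hsc n).continuousOn continuous_id'.continuousOn,
        cfc_id' ℝ c' hc'sa]
    set Gf : ℝ → ℝ := fun t => Real.sqrt (θ n) * sfun n t with hGf_def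
    have hGc : Continuous Gf := continuous_const.mul (hsc n)
    set G := cfc Gf c' with hG_def
    have hG' : IsSelfAdjoint G := IsSelfAdjoint.cfc
    have hsq : ∀ t : ℝ, 0 ≤ t → (sfun n t) * (sfun n t) = (t + θ n)⁻¹ := by
      intro t ht
      rw [hsfun_def]
      simp only [max_eq_left ht]
      rw [← mul_inv, Real.mul_self_sqrt (by linarith [hθ n])]
    have honek : (1:A) - s n * c' * s n = G * G := by
      have e1 : G * G = cfc (fun t => Gf t * Gf t) c' :=
        (cfc_mul _ _ c' hGc.continuousOn hGc.continuousOn).symm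
      have e0 : (1:A) = cfc (fun _ : ℝ => (1:ℝ)) c' := by
        rw [cfc_const 1 c' hc'sa, map_one]
      rw [e1, ← hk, e0,
        ← cfc_sub (fun _ => (1:ℝ)) (fun t => sfun n t * t * sfun n t) c' continuous_const.continuousOn
          (((hsc n).mul continuous_id').mul (hsc n)).continuousOn]
      refine cfc_congr fun t ht => ?_
      have ht0 := hspec t ht
      have h1 : sfun n t * t * sfun n t = t * (t + θ n)⁻¹ := by
        have e : sfun n t * t * sfun n t = t * (sfun n t * sfun n t) := by ring
        rw [e, hsq t ht0]
      have h2 : Gf t * Gf t = θ n * (t + θ n)⁻¹ := by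
        have e : Gf t * Gf t = (Real.sqrt (θ n) * Real.sqrt (θ n)) * (sfun n t * sfun n t) := by
          rw [hGf_def]; ring
        rw [e, hsq t ht0, Real.mul_self_sqrt (hθ n).le]
      rw [h1, h2]
      have hpos : 0 < t + θ n := by linarith [hθ n]
      field_simp
      ring
    have main : p * (s n * c' * s n) * p - q = -((p * G) * star (p * G)) := by
      have hstar : star (p * G) = G * p := by rw [star_mul, hG'.star_eq, hp'.star_eq]
      rw [hstar, hqp]
      have e2 : p * (s n * c' * s n) * p - p * p
          = -(p * ((1:A) - s n * c' * s n) * p) := by noncomm_ring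
      rw [e2, honek]
      noncomm_ring
    rw [main, norm_neg, CStarRing.norm_self_mul_star, ← CStarRing.norm_star_mul_self]
    have e4 : star (p * G) * (p * G) = G * q * G := by
      rw [star_mul, hG'.star_eq, hp'.star_eq, hqp]
      noncomm_ring
    rw [e4]
    have h4 : 0 ≤ G * q * G := by
      have := star_left_conjugate_nonneg hq0 G
      rwa [hG'.star_eq] at this
    have h3 : G * q * G ≤ G * c' * G := hG'.conjugate_le_conjugate hqc'
    have e5 : G * c' * G = cfc (fun t => Gf t * t * Gf t) c' := by
      rw [cfc_mul (fun t => Gf t * t) Gf c' ((hGc.mul continuous_id').continuousOn) hGc.continuousOn,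
        cfc_mul Gf (fun t => t) c' hGc.continuousOn continuous_id'.continuousOn,
        cfc_id' ℝ c' hc'sa]
    have h6 : ‖G * c' * G‖ ≤ θ n := by
      rw [e5]
      refine norm_cfc_le (hθ n).le fun t ht => ?_
      have ht0 := hspec t ht
      have hpos : 0 < t + θ n := by linarith [hθ n]
      have h7 : Gf t * t * Gf t = θ n * (t * (t + θ n)⁻¹) := by
        have e : Gf t * t * Gf t
            = (Real.sqrt (θ n) * Real.sqrt (θ n)) * (t * (sfun n t * sfun n t)) := by
          rw [hGf_def]; ring
        rw [e, hsq t ht0, Real.mul_self_sqrt (hθ n).le]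
      rw [h7, Real.norm_eq_abs,
        abs_of_nonneg (mul_nonneg (hθ n).le (mul_nonneg ht0 (inv_nonneg.mpr hpos.le)))]
      have h8 : t * (t + θ n)⁻¹ ≤ 1 := by
        rw [← div_eq_mul_inv, div_le_one hpos]
        linarith [hθ n]
      exact mul_le_of_le_one_right (hθ n).le h8
    exact le_trans (CStarAlgebra.norm_le_norm_of_nonneg_of_le h4 h3) h6
  -- assemble
  refine ⟨fun n => u n * (p * s n * star (v * h)), fun n => (v * h) * (s n * p), ?_, ?_, ?_⟩
  · intro n
    exact mul_mem (huS n) (mul_mem (mul_mem hpS (hsS n)) (star_mem (mul_mem hvS hhS)))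
  · intro n
    exact mul_mem (mul_mem hvS hhS) (mul_mem (hsS n) hpS)
  · have hXY : ∀ n, (u n * (p * s n * star (v * h))) * b * ((v * h) * (s n * p))
        = u n * (p * (s n * c' * s n) * p) := by
      intro n
      conv_rhs => rw [← hvh]
      noncomm_ring
    rw [tendsto_iff_norm_sub_tendsto_zero]
    have hbound : ∀ n, ‖u n * (p * (s n * c' * s n) * p) - p‖
        ≤ ((n:ℝ)+1) * θ n + ((n:ℝ)+1)⁻¹ := by
      intro n
      have t1 := dist_triangle (u n * (p * (s n * c' * s n) * p)) (u n * q) p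
      rw [dist_eq_norm, dist_eq_norm, dist_eq_norm] at t1
      have t2 : ‖u n * (p * (s n * c' * s n) * p) - u n * q‖ ≤ ((n:ℝ)+1) * θ n := by
        rw [← mul_sub]
        exact (norm_mul_le _ _).trans
          (mul_le_mul (hu_norm n) (hii n) (norm_nonneg _) (by positivity))
      linarith [hi n]
    have hb2 : ∀ n : ℕ, ((n:ℝ)+1) * θ n + ((n:ℝ)+1)⁻¹ ≤ 2 * ((n:ℝ)+1)⁻¹ := by
      intro n
      have hN : (0:ℝ) < (n:ℝ)+1 := by positivity
      have hc : ((n:ℝ)+1) * θ n = (((n:ℝ)+1)⁻¹) ^ 2 := by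
        rw [hθ_def]
        field_simp
      have hx1 : (((n:ℝ)+1)⁻¹) ≤ 1 := by
        rw [inv_le_one_iff₀]
        right
        linarith [(Nat.cast_nonneg n : (0:ℝ) ≤ (n:ℝ))]
      have hx0 : (0:ℝ) ≤ (((n:ℝ)+1)⁻¹) := by positivity
      rw [hc]
      nlinarith
    have hlim : Tendsto (fun n : ℕ => 2 * ((n:ℝ)+1)⁻¹) atTop (𝓝 0) := by
      have := tendsto_one_div_add_atTop_nhds_zero_nat.const_mul (2:ℝ)
      simpa [one_div] using this
    refine squeeze_zero (fun n => norm_nonneg _) (fun n => ?_) hlim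
    rw [hXY n]
    exact (hbound n).trans (hb2 n)

lemma keyW {S : StarSubalgebra ℂ A} {a b x y : A}
    (hxS : x ∈ S) (hyS : y ∈ S)
    (ha : 0 ≤ a) (hb : 0 ≤ b) {ε : ℝ}
    (hclose : ‖x * b * y - a‖ ≤ ε) :
    ∃ w, w ∈ S ∧ a - algebraMap ℝ A ε ≤ star w * b * w := by
  have ha' : IsSelfAdjoint a := .of_nonneg ha
  have hb' : IsSelfAdjoint b := .of_nonneg hb
  set r2 : ℝ := (Real.sqrt 2)⁻¹ with hr2_def
  have hr2 : (r2:ℂ) * (r2:ℂ) = (((2:ℝ)⁻¹:ℝ):ℂ) := by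
    rw [← Complex.ofReal_mul, hr2_def, ← mul_inv, Real.mul_self_sqrt (by norm_num)]
  set z := y + star x with hz_def
  set w : A := (r2:ℂ) • z with hw_def
  have hwS : w ∈ S := SMulMemClass.smul_mem _ (add_mem hyS (star_mem hxS))
  refine ⟨w, hwS, ?_⟩
  set c := x * b * y with hc_def
  have hstarc : star c = star y * b * star x := by
    rw [hc_def, star_mul, star_mul, hb'.star_eq, mul_assoc]
  set rec : A := (((2:ℝ)⁻¹:ℝ):ℂ) • (c + star c) with hrec_def
  have hrecsa : IsSelfAdjoint rec := by
    rw [hrec_def]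
    simp only [IsSelfAdjoint, star_smul, star_add, star_star, Complex.star_def,
      Complex.conj_ofReal]
    rw [add_comm]
  have hrec_close : ‖a - rec‖ ≤ ε := by
    have e1 : a - rec = (((2:ℝ)⁻¹:ℝ):ℂ) • ((a - c) + star (a - c)) := by
      rw [star_sub, ha'.star_eq, hrec_def]
      module
    rw [e1, norm_smul]
    rw [show ‖(((2:ℝ)⁻¹:ℝ):ℂ)‖ = 2⁻¹ by rw [Complex.norm_real]; norm_num]
    have h2 : ‖(a - c) + star (a - c)‖ ≤ ‖a - c‖ + ‖a - c‖ :=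
      (norm_add_le _ _).trans (by rw [norm_star])
    have h3 : ‖a - c‖ ≤ ε := by rwa [norm_sub_rev]
    linarith
  have h2 : a - rec ≤ algebraMap ℝ A ε := by
    refine le_trans (IsSelfAdjoint.le_algebraMap_norm_self (ha'.sub hrecsa)) ?_
    exact algebraMap_mono' hrec_close
  set yc : A := (r2:ℂ) • y with hyc_def
  set xc : A := (r2:ℂ) • x with hxc_def
  have expand : star w * b * w = rec + (star yc * b * yc + xc * b * star xc) := by
    have hz2 : star z * b * z = (c + star c) + (star y * b * y + x * b * star x) := by
      simp only [hz_def, star_add, star_star]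
      rw [hstarc]
      simp only [hc_def]
      noncomm_ring
    have e2 : star w * b * w = (((2:ℝ)⁻¹:ℝ):ℂ) • (star z * b * z) := by
      simp only [hw_def, star_smul, smul_mul_assoc, mul_smul_comm, smul_smul,
        Complex.star_def, Complex.conj_ofReal]
      rw [hr2]
    have e3 : star yc * b * yc = (((2:ℝ)⁻¹:ℝ):ℂ) • (star y * b * y) := by
      simp only [hyc_def, star_smul, smul_mul_assoc, mul_smul_comm, smul_smul,
        Complex.star_def, Complex.conj_ofReal]
      rw [hr2]
    have e4 : xc * b * star xc = (((2:ℝ)⁻¹:ℝ):ℂ) • (x * b * star x) := by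
      simp only [hxc_def, star_smul, smul_mul_assoc, mul_smul_comm, smul_smul,
        Complex.star_def, Complex.conj_ofReal]
      rw [hr2]
    rw [e2, e3, e4, hz2, hrec_def]
    simp only [smul_add]
  have h3 : rec ≤ star w * b * w := by
    rw [expand]
    exact le_add_of_nonneg_right
      (add_nonneg (star_left_conjugate_nonneg hb yc) (star_right_conjugate_nonneg hb xc))
  calc a - algebraMap ℝ A ε ≤ rec := by rwa [sub_le_comm] at h2
    _ ≤ star w * b * w := h3

lemma posApprox {S : StarSubalgebra ℂ A} (hS : IsClosed (S : Set A)) {a c : A}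
    (ha : 0 ≤ a) (hcS : c ∈ S) {δ : ℝ} (hca : ‖a - c‖ ≤ δ) :
    ∃ a', a' ∈ S ∧ 0 ≤ a' ∧ ‖a - a'‖ ≤ 2 * δ := by
  have hδ0 : 0 ≤ δ := le_trans (norm_nonneg _) hca
  have ha' : IsSelfAdjoint a := .of_nonneg ha
  set sa : A := (((2:ℝ)⁻¹:ℝ):ℂ) • (c + star c) with hsa_def
  have hsaS : sa ∈ S := SMulMemClass.smul_mem _ (add_mem hcS (star_mem hcS))
  have hsa : IsSelfAdjoint sa := by
    rw [hsa_def]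
    simp only [IsSelfAdjoint, star_smul, star_add, star_star, Complex.star_def,
      Complex.conj_ofReal]
    rw [add_comm]
  have hasa : ‖a - sa‖ ≤ δ := by
    have e1 : a - sa = (((2:ℝ)⁻¹:ℝ):ℂ) • ((a - c) + star (a - c)) := by
      rw [star_sub, ha'.star_eq, hsa_def]
      module
    rw [e1, norm_smul]
    rw [show ‖(((2:ℝ)⁻¹:ℝ):ℂ)‖ = 2⁻¹ by rw [Complex.norm_real]; norm_num]
    have h2 : ‖(a - c) + star (a - c)‖ ≤ ‖a - c‖ + ‖a - c‖ :=
      (norm_add_le _ _).trans (by rw [norm_star])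
    linarith
  have hlow : ∀ t ∈ spectrum ℝ sa, -δ ≤ t := by
    apply spectrum_lower hsa
    have h1 : a - sa ≤ algebraMap ℝ A δ :=
      le_trans (IsSelfAdjoint.le_algebraMap_norm_self (ha'.sub hsa)) (algebraMap_mono' hasa)
    have h2 : a - algebraMap ℝ A δ ≤ sa := by rwa [sub_le_comm] at h1
    have h3 : a ≤ sa + algebraMap ℝ A δ := by rwa [sub_le_iff_le_add] at h2
    exact le_trans ha h3
  refine ⟨cfc (fun t : ℝ => max t 0) sa, cfc_mem_of_mem_of_isClosed hS hsaS hsa _,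
    cfc_nonneg (fun t _ => le_max_right _ _), ?_⟩
  have e2 : sa - cfc (fun t : ℝ => max t 0) sa = cfc (fun t : ℝ => t - max t 0) sa := by
    rw [cfc_sub _ _ sa continuous_id'.continuousOn (by fun_prop), cfc_id' ℝ sa hsa]
  have h3 : ‖sa - cfc (fun t : ℝ => max t 0) sa‖ ≤ δ := by
    rw [e2]
    refine norm_cfc_le hδ0 fun t ht => ?_
    have hlt := hlow t ht
    rw [Real.norm_eq_abs]
    rcases le_or_gt 0 t with hc | hc
    · rw [max_eq_left hc]
      simp [hδ0]
    · rw [max_eq_right hc.le, sub_zero, abs_of_neg hc]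
      linarith
  have t1 := dist_triangle a sa (cfc (fun t : ℝ => max t 0) sa)
  rw [dist_eq_norm, dist_eq_norm, dist_eq_norm] at t1
  linarith

lemma exists_delta (ε K : ℝ) (hε : 0 < ε) (hK : 0 < K) :
    ∃ δ : ℝ, 0 < δ ∧ δ ≤ 1 ∧ δ ≤ ε/5 ∧ δ * K ≤ ε/4 := by
  refine ⟨min 1 (min (ε/5) (ε/(4*K))), lt_min one_pos (lt_min (by positivity) (by positivity)),
    min_le_left _ _, le_trans (min_le_right _ _) (min_le_left _ _), ?_⟩
  have h : min 1 (min (ε/5) (ε/(4*K))) ≤ ε/(4*K) :=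
    le_trans (min_le_right _ _) (min_le_right _ _)
  calc min 1 (min (ε/5) (ε/(4*K))) * K ≤ (ε/(4*K)) * K :=
        mul_le_mul_of_nonneg_right h hK.le
    _ = ε/4 := by
        field_simp

end Aux

set_option maxHeartbeats 2000000 in
/-- if `A` is locally approximated by a collection of C*-subalgebras
`C i`, then for positive `a ≾ b` in `A` and any `ε > 0` there are an index `i` and
positive `a_i, b_i ∈ C i` with `‖a − a_i‖ ≤ ε`, `‖b − b_i‖ ≤ ε`,
`(a_i − ε)₊ ≾ b_i` witnessed inside `C i`, and `b_i ≾ b` in `A`. -/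
theorem cuntzLE_localize {A : Type*} [CStarAlgebra A] [PartialOrder A] [StarOrderedRing A]
    {ι : Type*} (C : ι → StarSubalgebra ℂ A) (hCclosed : ∀ i, IsClosed (C i : Set A))
    (happrox : ∀ (F : Finset A) (ε : ℝ), 0 < ε →
      ∃ i, ∀ f ∈ F, ∃ c ∈ C i, ‖f - c‖ ≤ ε)
    (a b : A) (ha : 0 ≤ a) (hb : 0 ≤ b) (hab : CuntzLE a b)
    (ε : ℝ) (hε : 0 < ε) :
    ∃ (i : ι) (a' b' : A), a' ∈ C i ∧ b' ∈ C i ∧ 0 ≤ a' ∧ 0 ≤ b' ∧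
      ‖a - a'‖ ≤ ε ∧ ‖b - b'‖ ≤ ε ∧
      CuntzLEIn (C i : Set A) (cfc (fun t : ℝ => max (t - ε) 0) a') b' ∧
      CuntzLE b' b := by
  classical
  obtain ⟨xs, ys, htend⟩ := hab
  obtain ⟨N, hN⟩ := Metric.tendsto_atTop.mp htend (ε/2) (half_pos hε)
  have hclose2 : ‖xs N * b * ys N - a‖ < ε/2 := by
    have := hN N le_rfl
    rwa [dist_eq_norm] at this
  set xx := xs N with hxx
  set yy := ys N with hyy
  set R : ℝ := ‖xx‖ + ‖yy‖ + ‖b‖ + 5 with hR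
  have hR5 : 5 ≤ R := by
    rw [hR]
    linarith [norm_nonneg xx, norm_nonneg yy, norm_nonneg b]
  have hR0 : 0 < R := by linarith
  clear_value xx yy
  obtain ⟨δ, hδpos, hδ1, hδ5, hδR⟩ := exists_delta ε (7*R^2+2) hε (by positivity)
  clear_value R
  obtain ⟨i, hi⟩ := happrox {a, b, xx, yy} δ hδpos
  obtain ⟨ca, hcaS, hca⟩ := hi a (by simp)
  obtain ⟨cb, hcbS, hcb⟩ := hi b (by simp)
  obtain ⟨cx, hcxS, hcx⟩ := hi xx (by simp)
  obtain ⟨cy, hcyS, hcy⟩ := hi yy (by simp)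
  have hS : IsClosed ((C i) : Set A) := hCclosed i
  -- positive approximants
  obtain ⟨a', ha'S, ha'0, ha'close⟩ := posApprox hS ha hcaS hca
  obtain ⟨b'', hb''S, hb''0, hb''close⟩ := posApprox hS hb hcbS hcb
  have hb''sa : IsSelfAdjoint b'' := .of_nonneg hb''0
  -- cut down b''
  set b' := cfc (fun t : ℝ => max (t - 3*δ) 0) b'' with hb'_def
  have hb'S : b' ∈ C i := cfc_mem_of_mem_of_isClosed hS hb''S hb''sa _
  have hb'0 : 0 ≤ b' := cfc_nonneg (fun t _ => le_max_right _ _)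
  have hb''b' : ‖b'' - b'‖ ≤ 3*δ := by
    have e2 : b'' - b' = cfc (fun t : ℝ => t - max (t - 3*δ) 0) b'' := by
      rw [hb'_def, cfc_sub _ _ b'' continuous_id'.continuousOn (by fun_prop),
        cfc_id' ℝ b'' hb''sa]
    rw [e2]
    refine norm_cfc_le (by positivity) fun t ht => ?_
    have ht0 : 0 ≤ t := spectrum_nonneg_of_nonneg hb''0 ht
    rw [Real.norm_eq_abs]
    rcases le_or_gt (t - 3*δ) 0 with hc | hc
    · rw [max_eq_right hc, sub_zero, abs_of_nonneg ht0]
      linarith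
    · rw [max_eq_left hc.le]
      rw [show t - (t - 3*δ) = 3*δ by ring, abs_of_nonneg (by positivity)]
  have hbb' : ‖b - b'‖ ≤ 5*δ := by
    have t1 := dist_triangle b b'' b'
    rw [dist_eq_norm, dist_eq_norm, dist_eq_norm] at t1
    linarith
  -- b' ≾ b in A
  have hCuntz_b : CuntzLE b' b := by
    have hle : b'' - algebraMap ℝ A (3*δ) ≤ star (1:A) * b * (1:A) := by
      have h1 : b'' - b ≤ algebraMap ℝ A (3*δ) := by
        refine le_trans (IsSelfAdjoint.le_algebraMap_norm_self
          (hb''sa.sub (IsSelfAdjoint.of_nonneg hb))) (algebraMap_mono' ?_)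
        rw [norm_sub_rev]
        linarith
      rw [star_one, one_mul, mul_one]
      rwa [sub_le_comm] at h1
    obtain ⟨X, Y, _, _, htend'⟩ :=
      keyCore (S := (⊤ : StarSubalgebra ℂ A)) (by simp)
        (StarSubalgebra.mem_top) (StarSubalgebra.mem_top) (StarSubalgebra.mem_top)
        hb''0 hb (by positivity : (0:ℝ) < 3*δ) hle
    exact ⟨X, Y, htend'⟩
  -- estimate ‖cx * b' * cy - a'‖ ≤ ε
  have hnxx : ‖xx‖ ≤ R := by rw [hR]; linarith [norm_nonneg yy, norm_nonneg b]
  have hnyy : ‖yy‖ ≤ R := by rw [hR]; linarith [norm_nonneg xx, norm_nonneg b]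
  have hnb : ‖b‖ ≤ R := by rw [hR]; linarith [norm_nonneg xx, norm_nonneg yy]
  have hncx : ‖cx‖ ≤ R := by
    have e : cx = xx - (xx - cx) := by abel
    rw [e]
    refine le_trans (norm_sub_le _ _) ?_
    rw [hR]
    linarith [norm_nonneg yy, norm_nonneg b]
  have hncy : ‖cy‖ ≤ R := by
    have e : cy = yy - (yy - cy) := by abel
    rw [e]
    refine le_trans (norm_sub_le _ _) ?_
    rw [hR]
    linarith [norm_nonneg xx, norm_nonneg b]
  have hnb' : ‖b'‖ ≤ R := by
    have e : b' = b - (b - b') := by abel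
    rw [e]
    refine le_trans (norm_sub_le _ _) ?_
    rw [hR]
    linarith [norm_nonneg xx, norm_nonneg yy]
  have hdiff : ‖cx * b' * cy - xx * b * yy‖ ≤ 7*δ*R^2 := by
    have eid : cx * b' * cy - xx * b * yy
        = (cx - xx) * b' * cy + xx * (b' - b) * cy + xx * b * (cy - yy) := by
      noncomm_ring
    rw [eid]
    have t1 : ‖(cx - xx) * b' * cy‖ ≤ δ * R * R := by
      refine le_trans (norm_mul_le _ _) ?_
      refine mul_le_mul (le_trans (norm_mul_le _ _) ?_) hncy (norm_nonneg _) (by positivity)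
      refine mul_le_mul ?_ hnb' (norm_nonneg _) hδpos.le
      rw [norm_sub_rev]
      exact hcx
    have t2 : ‖xx * (b' - b) * cy‖ ≤ R * (5*δ) * R := by
      refine le_trans (norm_mul_le _ _) ?_
      refine mul_le_mul (le_trans (norm_mul_le _ _) ?_) hncy (norm_nonneg _) (by positivity)
      refine mul_le_mul hnxx ?_ (norm_nonneg _) (le_trans (norm_nonneg _) hnxx)
      rw [norm_sub_rev]
      exact hbb'
    have t3 : ‖xx * b * (cy - yy)‖ ≤ R * R * δ := by
      refine le_trans (norm_mul_le _ _) ?_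
      refine mul_le_mul (le_trans (norm_mul_le _ _) ?_) ?_ (norm_nonneg _) (by positivity)
      · exact mul_le_mul hnxx hnb (norm_nonneg _) (le_trans (norm_nonneg _) hnxx)
      · rw [norm_sub_rev]
        exact hcy
    refine le_trans (norm_add_le _ _) (le_trans (add_le_add (norm_add_le _ _) le_rfl) ?_)
    nlinarith [hδpos.le, hR0.le]
  have hclose' : ‖cx * b' * cy - a'‖ ≤ ε := by
    have t1 := dist_triangle (cx * b' * cy) (xx * b * yy) a'
    have t2 := dist_triangle (xx * b * yy) a a'
    rw [dist_eq_norm, dist_eq_norm, dist_eq_norm] at t1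
    rw [dist_eq_norm, dist_eq_norm, dist_eq_norm] at t2
    have h7 : 7*δ*R^2 + 2*δ ≤ ε/4 := by nlinarith
    linarith
  -- apply keyW + keyCore inside C i
  obtain ⟨w, hwS, hle⟩ := keyW hcxS hcyS ha'0 hb'0 hclose'
  obtain ⟨X, Y, hX, hY, htendXY⟩ :=
    keyCore hS ha'S hb'S hwS ha'0 hb'0 hε hle
  refine ⟨i, a', b', ha'S, hb'S, ha'0, hb'0, ?_, ?_, ⟨X, Y, hX, hY, htendXY⟩, hCuntz_b⟩
  · linarith
  · linarith
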